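/- Given a Merkle tree of depth d and a valid authentication path for position i verifying leaf value v against root r, if the honest tree built from leaves l_0, ..., l_{2^d - 1} has root r and l_i ≠ v, then a collision for H can be extracted from the two computations. -/
import Mathlib


def HashCollision {α : Type*} (H : α → α) : Prop :=
  ∃ x y, x ≠ y ∧ H x = H y

def merkleRoot {α : Type*} [Inhabited α] (H : α → α) (pair : α → α → α) :
    ℕ → List α → α
  | 0, l => H (l.headD default)
  | d + 1, l => H (pair (merkleRoot H pair d (l.take (2 ^ d)))
                        (merkleRoot H pair d (l.drop (2 ^ d))))

/-- Recompute the root from a current digest `h`, a position `i` (whose binary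
expansion, least-significant bit first, selects left/right), and a list of
sibling digests, hashing upward. -/
def pathRoot {α : Type*} (H : α → α) (pair : α → α → α) :
    α → ℕ → List α → α
  | h, _, [] => h
  | h, i, s :: rest =>
      pathRoot H pair (if i % 2 = 1 then H (pair s h) else H (pair h s))
        (i / 2) rest

/-- Verify the authentication path for claimed leaf value `v` at position `i`. -/
def verifyPath {α : Type*} (H : α → α) (pair : α → α → α)
    (v : α) (i : ℕ) (sibs : List α) : α :=
  pathRoot H pair (H v) i sibs

lemma pathRoot_append {α : Type*} (H : α → α) (pair : α → α → α)
    (a b : List α) : ∀ (h : α) (i : ℕ),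
    pathRoot H pair h i (a ++ b)
      = pathRoot H pair (pathRoot H pair h i a) (i / 2 ^ a.length) b := by
  induction a with
  | nil => intro h i; simp [pathRoot]
  | cons s rest ih =>
      intro h i
      simp only [List.cons_append, List.length_cons]
      rw [pathRoot, pathRoot, ih]
      congr 1
      rw [Nat.div_div_eq_div_mul, ← pow_succ']

lemma merkle_aux {α : Type*} [Inhabited α]
    (H : α → α) (pair : α → α → α) (hpair : Function.Injective2 pair) :
    ∀ (d : ℕ) (sibs : List α) (_ : sibs.length = d)
      (i : ℕ) (leaves : List α) (_ : leaves.length = 2 ^ d) (v : α),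
      pathRoot H pair (H v) i sibs = merkleRoot H pair d leaves →
      leaves.getD (i % 2 ^ d) default ≠ v → HashCollision H := by
  intro d
  induction d with
  | zero =>
      intro sibs hs i leaves hl v hver hwrong
      rw [List.length_eq_zero_iff] at hs
      subst hs
      simp only [pathRoot, pow_zero, Nat.mod_one] at hver hwrong
      have hhead : leaves.getD 0 default = leaves.headD default := by
        cases leaves with
        | nil => simp at hl
        | cons a t => rfl
      exact ⟨leaves.headD default, v, by rw [← hhead]; exact hwrong,
        by rw [hver, merkleRoot]⟩
  | succ d ih =>
      intro sibs hs i leaves hl v hver hwrong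
      rcases sibs.eq_nil_or_concat with rfl | ⟨l, s, rfl⟩
      · simp at hs
      have hld : l.length = d := by simpa using hs
      rw [List.concat_eq_append] at hver
      rw [pathRoot_append, hld] at hver
      set X := pathRoot H pair (H v) i l with hX
      have hq2 : (2 : ℕ) ^ (d + 1) = 2 ^ d * 2 := by ring
      have hmm : i % 2 ^ (d + 1) % 2 ^ d = i % 2 ^ d :=
        Nat.mod_mod_of_dvd _ ⟨2, hq2⟩
      have hdd : i % 2 ^ (d + 1) / 2 ^ d = i / 2 ^ d % 2 := by
        rw [hq2]; exact Nat.mod_mul_right_div_self i (2 ^ d) 2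
      have hqlt : i % 2 ^ (d + 1) < 2 ^ (d + 1) := Nat.mod_lt _ (by positivity)
      have hP : (0:ℕ) < 2 ^ d := by positivity
      have htl : (leaves.take (2 ^ d)).length = 2 ^ d := by
        rw [List.length_take, hl]; omega
      have hdl : (leaves.drop (2 ^ d)).length = 2 ^ d := by
        rw [List.length_drop, hl]; omega
      rw [merkleRoot] at hver
      rcases Nat.mod_two_eq_zero_or_one (i / 2 ^ d) with hbit | hbit
      · -- left half
        simp only [pathRoot, hbit] at hver
        norm_num at hver
        by_cases hcol : pair X s
            = pair (merkleRoot H pair d (List.take (2 ^ d) leaves))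
                   (merkleRoot H pair d (List.drop (2 ^ d) leaves))
        · obtain ⟨h1, _⟩ := hpair hcol
          refine ih l hld i (leaves.take (2 ^ d)) htl v (hX ▸ h1) ?_
          have : i % 2 ^ (d + 1) = i % 2 ^ d := by
            have h0 := Nat.div_add_mod (i % 2 ^ (d+1)) (2 ^ d)
            rw [hdd, hbit, hmm] at h0
            omega
          rw [this] at hwrong
          intro hc; apply hwrong
          rw [← hc]
          have hlt : i % 2 ^ d < 2 ^ d := Nat.mod_lt _ hP
          rw [List.getD_eq_getElem _ _ (by omega : i % 2 ^ d < leaves.length),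
              List.getD_eq_getElem _ _ (by omega : i % 2 ^ d < (leaves.take (2^d)).length),
              List.getElem_take]
        · exact ⟨_, _, hcol, hver⟩
      · -- right half
        simp only [pathRoot, hbit] at hver
        norm_num at hver
        by_cases hcol : pair s X
            = pair (merkleRoot H pair d (List.take (2 ^ d) leaves))
                   (merkleRoot H pair d (List.drop (2 ^ d) leaves))
        · obtain ⟨_, h2⟩ := hpair hcol
          refine ih l hld i (leaves.drop (2 ^ d)) hdl v (hX ▸ h2) ?_
          have hq : i % 2 ^ (d + 1) = 2 ^ d + i % 2 ^ d := by
            have h0 := Nat.div_add_mod (i % 2 ^ (d+1)) (2 ^ d)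
            rw [hdd, hbit, hmm] at h0
            omega
          rw [hq] at hwrong
          intro hc; apply hwrong
          rw [← hc]
          have hlt : i % 2 ^ d < 2 ^ d := Nat.mod_lt _ hP
          rw [List.getD_eq_getElem _ _ (by omega : 2 ^ d + i % 2 ^ d < leaves.length),
              List.getD_eq_getElem _ _ (by omega : i % 2 ^ d < (leaves.drop (2^d)).length),
              List.getElem_drop]
        · exact ⟨_, _, hcol, hver⟩

/-- Soundness of Merkle authentication paths: if a path of length `d` for
position `i` verifies leaf value `v` against the root of the honest tree built
from `leaves`, but the honest leaf at position `i` differs from `v`, then a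
hash collision can be extracted. -/
theorem merkle_path_soundness {α : Type*} [Inhabited α]
    (H : α → α) (pair : α → α → α) (hpair : Function.Injective2 pair)
    (d : ℕ) (leaves : List α) (hlen : leaves.length = 2 ^ d)
    (i : ℕ) (hi : i < 2 ^ d) (v : α) (sibs : List α) (hsibs : sibs.length = d)
    (hver : verifyPath H pair v i sibs = merkleRoot H pair d leaves)
    (hwrong : leaves.getD i default ≠ v) :
    HashCollision H := by
  refine merkle_aux H pair hpair d sibs hsibs i leaves hlen v hver ?_
  rwa [Nat.mod_eq_of_lt hi]
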